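/- Let q = p^r be an odd prime power, where p is an odd prime and r ≥ 1. Then for every subset S ⊆ [2q−1], the descent set statistic satisfies β_{2q}(S) ≡ (−1)^{|S ∖ {q}|} (mod p), where |S ∖ {q}| is the cardinality of S with the element q removed. -/

import Mathlib

/-- The descent set of a permutation of `Fin n`, as a subset of `[n-1] = {1,…,n-1}`
(1-based positions): `i` is a descent if `π(i) > π(i+1)`. -/
def descentSet (n : ℕ) (π : Equiv.Perm (Fin n)) : Finset ℕ :=
  (Finset.Ico 1 n).filter fun i => ∀ h : i < n, π ⟨i, h⟩ < π ⟨i - 1, by omega⟩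

/-- The descent set statistic `β_n(S)`: the number of permutations of `{1,…,n}`
with descent set `S`. -/
def beta (n : ℕ) (S : Finset ℕ) : ℕ :=
  (Finset.univ.filter fun π : Equiv.Perm (Fin n) => descentSet n π = S).card

/-- The descent set polynomial `Q_n(t) = ∑_{S ⊆ [n-1]} t^{β_n(S)}`. -/
noncomputable def Q (n : ℕ) : Polynomial ℤ :=
  ∑ S ∈ (Finset.Ico 1 n).powerset, Polynomial.X ^ beta n S


open Finset Equiv

/-- number of permutations with descent set contained in `T` -/
def ASet (n : ℕ) (T : Finset ℕ) : ℕ :=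
  (Finset.univ.filter fun π : Equiv.Perm (Fin n) => descentSet n π ⊆ T).card

lemma mem_descentSet {n : ℕ} {π : Equiv.Perm (Fin n)} {i : ℕ} (h1 : 1 ≤ i) (h : i < n) :
    i ∈ descentSet n π ↔ π ⟨i, h⟩ < π ⟨i - 1, by omega⟩ := by
  simp only [descentSet, Finset.mem_filter, Finset.mem_Ico]
  constructor
  · rintro ⟨-, h2⟩; exact h2 h
  · intro h2; exact ⟨⟨h1, h⟩, fun _ => h2⟩

lemma descentSet_subset_Ico {n : ℕ} (π : Equiv.Perm (Fin n)) :
    descentSet n π ⊆ Finset.Ico 1 n := Finset.filter_subset _ _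

lemma ASet_empty (n : ℕ) : ASet n ∅ = 1 := by
  rw [ASet]
  rw [show (Finset.univ.filter fun π : Equiv.Perm (Fin n) => descentSet n π ⊆ ∅) = {1} from ?_]
  · exact Finset.card_singleton _
  ext π
  simp only [Finset.mem_filter, Finset.mem_univ, true_and, Finset.subset_empty,
    Finset.mem_singleton]
  constructor
  · intro hd
    -- π is strictly monotone
    have key : ∀ (k : ℕ) (h : k + 1 < n), π ⟨k, by omega⟩ < π ⟨k + 1, h⟩ := by
      intro k h
      have : (k + 1) ∉ descentSet n π := by rw [hd]; exact Finset.notMem_empty _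
      rw [mem_descentSet (by omega) h] at this
      have hne : π ⟨k + 1, h⟩ ≠ π ⟨k + 1 - 1, by omega⟩ := by
        intro hc
        have := π.injective hc
        simp [Fin.ext_iff] at this
      have h2 : π ⟨k+1-1, by omega⟩ < π ⟨k+1, h⟩ := lt_of_le_of_ne (not_lt.mp this) (Ne.symm hne)
      convert h2 using 2 <;> simp
    have chain : ∀ (k j : ℕ) (hj : j < n) (hk : k < n), j < k → π ⟨j, hj⟩ < π ⟨k, hk⟩ := by
      intro k
      induction k with
      | zero => omega
      | succ m ih =>
        intro j hj hk hjk
        rcases Nat.lt_or_ge j m with hc | hc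
        · exact (ih j hj (by omega) hc).trans (key m hk)
        · have : j = m := by omega
          subst this
          exact key j hk
    have hmono : StrictMono (π : Fin n → Fin n) := by
      intro a b hab
      exact chain b a a.isLt b.isLt hab
    have : (π : Fin n → Fin n) = id := by
      apply (hmono.range_inj strictMono_id).mp
      simp [Set.range_eq_univ.mpr π.surjective]
    ext i : 1
    exact congrFun this i
  · intro h
    subst h
    ext i
    simp only [descentSet, Finset.mem_filter, Finset.mem_Ico, Finset.notMem_empty, iff_false,
      not_and]
    rintro ⟨h1, h2⟩ 
    intro hcon
    have := hcon h2
    simp only [Equiv.Perm.coe_one, id_eq] at this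
    rw [Fin.lt_iff_val_lt_val] at this
    simp at this
    omega

section Build

variable {n s : ℕ}

lemma compl_card (hsn : s ≤ n) {V : Finset (Fin n)} (hV : V.card = s) : Vᶜ.card = n - s := by
  rw [Finset.card_compl, hV, Fintype.card_fin]

/-- Build a permutation of `Fin n` from a value set `V` for the first `s` positions
and a permutation `σ` for the remaining positions. -/
def bfun (hsn : s ≤ n) (V : Finset (Fin n)) (hV : V.card = s) (σ : Equiv.Perm (Fin (n - s))) :
    Fin n → Fin n := fun i =>
  if h : (i : ℕ) < s then V.orderEmbOfFin hV ⟨i, h⟩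
  else Vᶜ.orderEmbOfFin (compl_card hsn hV) (σ ⟨(i : ℕ) - s, by have := i.2; omega⟩)

lemma bfun_inj (hsn : s ≤ n) (V : Finset (Fin n)) (hV : V.card = s)
    (σ : Equiv.Perm (Fin (n - s))) : Function.Injective (bfun hsn V hV σ) := by
  intro i j hij
  unfold bfun at hij
  split_ifs at hij with h1 h2 h2
  · have := (V.orderEmbOfFin hV).injective hij
    simpa [Fin.ext_iff] using this
  · exfalso
    have m1 : V.orderEmbOfFin hV ⟨i, h1⟩ ∈ V := Finset.orderEmbOfFin_mem _ _ _
    have m2 : Vᶜ.orderEmbOfFin (compl_card hsn hV) (σ ⟨(j : ℕ) - s, by have := j.2; omega⟩) ∈ Vᶜ :=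
      Finset.orderEmbOfFin_mem _ _ _
    rw [hij] at m1
    exact (Finset.mem_compl.mp m2) m1
  · exfalso
    have m1 : Vᶜ.orderEmbOfFin (compl_card hsn hV) (σ ⟨(i : ℕ) - s, by have := i.2; omega⟩) ∈ Vᶜ :=
      Finset.orderEmbOfFin_mem _ _ _
    have m2 : V.orderEmbOfFin hV ⟨j, h2⟩ ∈ V := Finset.orderEmbOfFin_mem _ _ _
    rw [hij] at m1
    exact (Finset.mem_compl.mp m1) m2
  · have := σ.injective ((Vᶜ.orderEmbOfFin (compl_card hsn hV)).injective hij)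
    have : (i : ℕ) - s = (j : ℕ) - s := by simpa [Fin.ext_iff] using this
    have : (i : ℕ) = (j : ℕ) := by omega
    exact Fin.ext this

/-- The built permutation. -/
noncomputable def bperm (hsn : s ≤ n) (V : Finset (Fin n)) (hV : V.card = s) (σ : Equiv.Perm (Fin (n - s))) :
    Equiv.Perm (Fin n) :=
  Equiv.ofBijective _ (Finite.injective_iff_bijective.mp (bfun_inj hsn V hV σ))

lemma bperm_apply_lt (hsn : s ≤ n) (V : Finset (Fin n)) (hV : V.card = s)
    (σ : Equiv.Perm (Fin (n - s))) (i : Fin n) (h : (i : ℕ) < s) :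
    bperm hsn V hV σ i = V.orderEmbOfFin hV ⟨i, h⟩ := by
  simp [bperm, Equiv.ofBijective, bfun, h]

lemma bperm_apply_ge (hsn : s ≤ n) (V : Finset (Fin n)) (hV : V.card = s)
    (σ : Equiv.Perm (Fin (n - s))) (i : Fin n) (h : ¬ (i : ℕ) < s) :
    bperm hsn V hV σ i =
      Vᶜ.orderEmbOfFin (compl_card hsn hV) (σ ⟨(i : ℕ) - s, by have := i.2; omega⟩) := by
  simp [bperm, Equiv.ofBijective, bfun, h]

end Build

section Descents

variable {n s : ℕ}

lemma bperm_not_descent_lt (hsn : s ≤ n) (V : Finset (Fin n)) (hV : V.card = s)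
    (σ : Equiv.Perm (Fin (n - s))) {i : ℕ} (h1 : 1 ≤ i) (h2 : i < s) :
    i ∉ descentSet n (bperm hsn V hV σ) := by
  have hin : i < n := lt_of_lt_of_le h2 hsn
  rw [mem_descentSet h1 hin]
  push_neg
  have e1 : bperm hsn V hV σ ⟨i - 1, by omega⟩ = V.orderEmbOfFin hV ⟨i - 1, by omega⟩ :=
    bperm_apply_lt hsn V hV σ ⟨i - 1, by omega⟩ (by simp; omega)
  have e2 : bperm hsn V hV σ ⟨i, hin⟩ = V.orderEmbOfFin hV ⟨i, h2⟩ :=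
    bperm_apply_lt hsn V hV σ ⟨i, hin⟩ h2
  rw [e1, e2]
  exact le_of_lt ((V.orderEmbOfFin hV).strictMono (by simp [Fin.lt_iff_val_lt_val]; omega))

lemma bperm_descent_gt (hsn : s ≤ n) (V : Finset (Fin n)) (hV : V.card = s)
    (σ : Equiv.Perm (Fin (n - s))) {i : ℕ} (h1 : s < i) (h2 : i < n) :
    (i ∈ descentSet n (bperm hsn V hV σ) ↔ (i - s) ∈ descentSet (n - s) σ) := by
  rw [mem_descentSet (by omega) h2, mem_descentSet (i := i - s) (by omega) (by omega)]
  have e1 : bperm hsn V hV σ ⟨i, h2⟩ =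
      Vᶜ.orderEmbOfFin (compl_card hsn hV) (σ ⟨i - s, by omega⟩) := by
    rw [bperm_apply_ge hsn V hV σ ⟨i, h2⟩ (by simp; omega)]
  have e2 : bperm hsn V hV σ ⟨i - 1, by omega⟩ =
      Vᶜ.orderEmbOfFin (compl_card hsn hV) (σ ⟨i - 1 - s, by omega⟩) := by
    rw [bperm_apply_ge hsn V hV σ ⟨i - 1, by omega⟩ (by simp; omega)]
  rw [e1, e2, OrderEmbedding.lt_iff_lt]
  have : (⟨i - 1 - s, by omega⟩ : Fin (n - s)) = ⟨i - s - 1, by omega⟩ := by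
    simp; omega
  rw [this]

lemma bperm_descent_subset_iff (hs : 0 < s) (hsn : s < n) (T : Finset ℕ)
    (hT : ∀ t ∈ T, s < t ∧ t < n) (V : Finset (Fin n)) (hV : V.card = s)
    (σ : Equiv.Perm (Fin (n - s))) :
    descentSet n (bperm hsn.le V hV σ) ⊆ insert s T ↔
      descentSet (n - s) σ ⊆ T.image (· - s) := by
  constructor
  · intro h j hj
    have hj1 : 1 ≤ j ∧ j < n - s := by
      have := descentSet_subset_Ico σ hj
      simp only [Finset.mem_Ico] at this
      exact this
    have : (j + s) ∈ descentSet n (bperm hsn.le V hV σ) := by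
      rw [bperm_descent_gt hsn.le V hV σ (by omega) (by omega)]
      simpa using hj
    have := h this
    rw [Finset.mem_insert] at this
    rcases this with h' | h'
    · omega
    · exact Finset.mem_image.mpr ⟨j + s, h', by omega⟩
  · intro h i hi
    have hi1 : 1 ≤ i ∧ i < n := by
      have := descentSet_subset_Ico _ hi
      simp only [Finset.mem_Ico] at this
      exact this
    rcases Nat.lt_trichotomy i s with hc | hc | hc
    · exact absurd hi (bperm_not_descent_lt hsn.le V hV σ hi1.1 hc)
    · subst hc; exact Finset.mem_insert_self _ _
    · rw [bperm_descent_gt hsn.le V hV σ hc hi1.2] at hi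
      have := h hi
      rw [Finset.mem_image] at this
      obtain ⟨t, ht, htv⟩ := this
      have := hT t ht
      have : t = i := by omega
      subst this
      exact Finset.mem_insert_of_mem ht

end Descents

section Surj

variable {n s : ℕ}

lemma ascent_of_not_descent (π : Equiv.Perm (Fin n)) {i : ℕ} (h1 : 1 ≤ i) (h : i < n)
    (hnd : i ∉ descentSet n π) : π ⟨i - 1, by omega⟩ < π ⟨i, h⟩ := by
  rw [mem_descentSet h1 h] at hnd
  have hne : π ⟨i, h⟩ ≠ π ⟨i - 1, by omega⟩ := by
    intro hc
    have := π.injective hc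
    simp [Fin.ext_iff] at this
    omega
  exact lt_of_le_of_ne (not_lt.mp hnd) (Ne.symm hne)

lemma ascent_chain (π : Equiv.Perm (Fin n)) {a b : ℕ} (hb : b < n) (hab : a < b)
    (hnd : ∀ i, a < i → i ≤ b → i ∉ descentSet n π) :
    π ⟨a, by omega⟩ < π ⟨b, hb⟩ := by
  induction b with
  | zero => omega
  | succ m ih =>
    have key : π ⟨m, by omega⟩ < π ⟨m + 1, hb⟩ := by
      have := ascent_of_not_descent π (i := m + 1) (by omega) hb
        (hnd (m + 1) (by omega) (le_refl _))
      simpa using this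
    rcases Nat.lt_or_ge a m with hc | hc
    · exact (ih (by omega) hc (fun i hi1 hi2 => hnd i hi1 (by omega))).trans key
    · have : a = m := by omega
      subst this
      exact key

lemma exists_bperm (hsn : s < n) (T : Finset ℕ) (hT : ∀ t ∈ T, s < t ∧ t < n)
    (π : Equiv.Perm (Fin n)) (hπ : descentSet n π ⊆ insert s T) :
    ∃ (V : Finset (Fin n)) (hV : V.card = s) (σ : Equiv.Perm (Fin (n - s))),
      bperm hsn.le V hV σ = π := by
  classical
  have hinjf : Function.Injective (fun j : Fin s => π (Fin.castLE hsn.le j)) :=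
    fun a b hab => (Fin.castLE_injective hsn.le) (π.injective hab)
  set V : Finset (Fin n) :=
    Finset.image (fun j : Fin s => π (Fin.castLE hsn.le j)) Finset.univ with hVdef
  have humem : ∀ j : Fin (n - s), π ⟨s + (j : ℕ), by have := j.2; omega⟩ ∈ Vᶜ := by
    intro j
    rw [Finset.mem_compl]
    intro hmem
    rw [hVdef, Finset.mem_image] at hmem
    obtain ⟨j', -, hj'⟩ := hmem
    have := π.injective hj'
    have : (j' : ℕ) = s + (j : ℕ) := by
      simpa [Fin.ext_iff] using this
    have := j'.2
    omega
  have hV : V.card = s := by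
    rw [hVdef, Finset.card_image_of_injective _ hinjf, Finset.card_univ, Fintype.card_fin]
  have hVc : Vᶜ.card = n - s := compl_card hsn.le hV
  set g : Fin (n - s) → Fin (n - s) := fun j =>
    (Vᶜ.orderIsoOfFin hVc).symm ⟨π ⟨s + (j : ℕ), by have := j.2; omega⟩, humem j⟩ with hgdef
  have hginj : Function.Injective g := by
    intro a b hab
    rw [hgdef] at hab
    have h1 := (Vᶜ.orderIsoOfFin hVc).symm.injective hab
    have h2 := Subtype.ext_iff.mp h1
    have h3 := π.injective h2
    have : s + (a : ℕ) = s + (b : ℕ) := by simpa [Fin.ext_iff] using h3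
    exact Fin.ext (by omega)
  set σ : Equiv.Perm (Fin (n - s)) :=
    Equiv.ofBijective g (Finite.injective_iff_bijective.mp hginj) with hσdef
  refine ⟨V, hV, σ, ?_⟩
  have hσapp : ∀ j : Fin (n - s), σ j = g j := fun j => rfl
  apply Equiv.ext
  intro i
  rcases Nat.lt_or_ge (i : ℕ) s with h | h
  · rw [bperm_apply_lt hsn.le V hV σ i h]
    have hf : (fun j : Fin s => π (Fin.castLE hsn.le j)) = V.orderEmbOfFin hV := by
      apply Finset.orderEmbOfFin_unique hV
      · intro x
        rw [hVdef, Finset.mem_image]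
        exact ⟨x, Finset.mem_univ _, rfl⟩
      · intro a b hab
        have goal : π ⟨(a : ℕ), by have := a.2; omega⟩ < π ⟨(b : ℕ), by have := b.2; omega⟩ := by
          apply ascent_chain π _ hab
          intro i hi1 hi2 hid
          have hmem := hπ hid
          rw [Finset.mem_insert] at hmem
          rcases hmem with h' | h'
          · have := b.2; omega
          · have := (hT i h').1
            have := b.2; omega
        exact goal
    rw [← hf]
    congr 1
  · rw [bperm_apply_ge hsn.le V hV σ i (by omega)]
    rw [hσapp, hgdef]
    have key : Vᶜ.orderEmbOfFin hVc ((Vᶜ.orderIsoOfFin hVc).symm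
        ⟨π ⟨s + ((⟨(i:ℕ) - s, by have := i.2; omega⟩ : Fin (n-s)) : ℕ), by have := i.2; omega⟩,
          humem _⟩) = π ⟨s + ((i:ℕ) - s), by have := i.2; omega⟩ := by
      rw [← Finset.coe_orderIsoOfFin_apply, OrderIso.apply_symm_apply]
    rw [key]
    congr 1
    apply Fin.ext
    simp
    omega

end Surj

section Rec

variable {n s : ℕ}

lemma bperm_V_eq (hsn : s < n) (V : Finset (Fin n)) (hV : V.card = s)
    (σ : Equiv.Perm (Fin (n - s))) :
    Finset.image (fun j : Fin s => bperm hsn.le V hV σ (Fin.castLE hsn.le j)) Finset.univ = V := by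
  apply Finset.eq_of_subset_of_card_le
  · intro x hx
    rw [Finset.mem_image] at hx
    obtain ⟨j, -, rfl⟩ := hx
    rw [bperm_apply_lt hsn.le V hV σ (Fin.castLE hsn.le j) (by simpa using j.2)]
    exact Finset.orderEmbOfFin_mem _ _ _
  · rw [hV, Finset.card_image_of_injective _
      (fun a b hab => (Fin.castLE_injective hsn.le) ((bperm hsn.le V hV σ).injective hab)),
      Finset.card_univ, Fintype.card_fin]

lemma bperm_inj (hsn : s < n) (V W : Finset (Fin n)) (hV : V.card = s) (hW : W.card = s)
    (σ τ : Equiv.Perm (Fin (n - s)))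
    (h : bperm hsn.le V hV σ = bperm hsn.le W hW τ) : V = W ∧ σ = τ := by
  have hVW : V = W := by
    rw [← bperm_V_eq hsn V hV σ, ← bperm_V_eq hsn W hW τ, h]
  subst hVW
  refine ⟨rfl, ?_⟩
  apply Equiv.ext
  intro j
  have hj : s + (j : ℕ) < n := by have := j.2; omega
  have e1 : bperm hsn.le V hV σ ⟨s + (j : ℕ), hj⟩ =
      Vᶜ.orderEmbOfFin (compl_card hsn.le hV) (σ ⟨s + (j : ℕ) - s, by have := j.2; omega⟩) :=
    bperm_apply_ge hsn.le V hV σ _ (by simp)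
  have e2 : bperm hsn.le V hW τ ⟨s + (j : ℕ), hj⟩ =
      Vᶜ.orderEmbOfFin (compl_card hsn.le hW) (τ ⟨s + (j : ℕ) - s, by have := j.2; omega⟩) :=
    bperm_apply_ge hsn.le V hW τ _ (by simp)
  have := e1.symm.trans ((DFunLike.congr_fun h _).trans e2)
  have h2 := (Vᶜ.orderEmbOfFin (compl_card hsn.le hV)).injective this
  have h3 : (⟨s + (j : ℕ) - s, by have := j.2; omega⟩ : Fin (n - s)) = j :=
    Fin.ext (by simp)
  rwa [h3] at h2

lemma ASet_rec (hs : 0 < s) (hsn : s < n) (T : Finset ℕ) (hT : ∀ t ∈ T, s < t ∧ t < n) :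
    ASet n (insert s T) = n.choose s * ASet (n - s) (T.image (· - s)) := by
  classical
  have h1 : n.choose s = ((Finset.univ : Finset (Fin n)).powersetCard s).card := by
    rw [Finset.card_powersetCard, Finset.card_univ, Fintype.card_fin]
  rw [ASet, ASet, h1, ← Finset.card_product]
  refine (Finset.card_bij
    (fun pr (hpr : pr ∈ _ ×ˢ _) => bperm hsn.le pr.1
      (Finset.mem_powersetCard_univ.mp (Finset.mem_product.mp hpr).1) pr.2)
    ?_ ?_ ?_).symm
  · intro pr hpr
    rw [Finset.mem_filter]
    refine ⟨Finset.mem_univ _, ?_⟩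
    rw [bperm_descent_subset_iff hs hsn T hT]
    have := (Finset.mem_product.mp hpr).2
    rw [Finset.mem_filter] at this
    exact this.2
  · intro pr1 hpr1 pr2 hpr2 heq
    have := bperm_inj hsn pr1.1 pr2.1 _ _ pr1.2 pr2.2 heq
    exact Prod.ext this.1 this.2
  · intro π hπ
    rw [Finset.mem_filter] at hπ
    obtain ⟨V, hV, σ, hb⟩ := exists_bperm hsn T hT π hπ.2
    refine ⟨(V, σ), ?_, hb⟩
    rw [Finset.mem_product]
    constructor
    · exact Finset.mem_powersetCard_univ.mpr hV
    · rw [Finset.mem_filter]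
      refine ⟨Finset.mem_univ _, ?_⟩
      rw [← bperm_descent_subset_iff hs hsn T hT V hV σ, hb]
      exact hπ.2

end Rec

section Mobius

lemma ASet_eq_sum_beta (n : ℕ) (T : Finset ℕ) :
    ASet n T = ∑ U ∈ T.powerset, beta n U := by
  classical
  rw [ASet]
  rw [Finset.card_eq_sum_card_fiberwise (f := fun π : Equiv.Perm (Fin n) => descentSet n π)
    (t := T.powerset) (fun π hπ => by
      rw [Finset.mem_coe, Finset.mem_filter] at hπ
      exact Finset.mem_coe.mpr (Finset.mem_powerset.mpr hπ.2))]
  apply Finset.sum_congr rfl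
  intro U hU
  rw [beta]
  congr 1
  ext π
  simp only [Finset.mem_filter, Finset.mem_univ, true_and]
  constructor
  · rintro ⟨-, h⟩; exact h
  · intro h
    exact ⟨h ▸ Finset.mem_powerset.mp hU, h⟩

lemma sum_interval_neg_one (S U : Finset ℕ) (hU : U ⊆ S) :
    ∑ T ∈ S.powerset.filter (fun T => U ⊆ T), (-1 : ℤ) ^ ((S \ T).card)
      = if U = S then 1 else 0 := by
  classical
  have hbij : ∑ T ∈ S.powerset.filter (fun T => U ⊆ T), (-1 : ℤ) ^ ((S \ T).card)
      = ∑ W ∈ (S \ U).powerset, (-1 : ℤ) ^ (((S \ U) \ W).card) := by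
    refine (Finset.sum_bij (fun W hW => U ∪ W) ?_ ?_ ?_ ?_).symm
    · intro W hW
      rw [Finset.mem_powerset] at hW
      rw [Finset.mem_filter, Finset.mem_powerset]
      exact ⟨Finset.union_subset hU (hW.trans (Finset.sdiff_subset)), Finset.subset_union_left⟩
    · intro W1 hW1 W2 hW2 heq
      rw [Finset.mem_powerset] at hW1 hW2
      have h1 : W1 = (U ∪ W1) \ U := by
        rw [Finset.union_sdiff_left]
        exact (Finset.sdiff_eq_self_iff_disjoint.mpr
          (Finset.disjoint_of_subset_left hW1 Finset.sdiff_disjoint)).symm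
      have h2 : W2 = (U ∪ W2) \ U := by
        rw [Finset.union_sdiff_left]
        exact (Finset.sdiff_eq_self_iff_disjoint.mpr
          (Finset.disjoint_of_subset_left hW2 Finset.sdiff_disjoint)).symm
      change U ∪ W1 = U ∪ W2 at heq
      rw [h1, h2, heq]
    · intro T hT
      rw [Finset.mem_filter, Finset.mem_powerset] at hT
      refine ⟨T \ U, Finset.mem_powerset.mpr (Finset.sdiff_subset_sdiff hT.1 le_rfl), ?_⟩
      show U ∪ (T \ U) = T
      rw [Finset.union_sdiff_of_subset hT.2]
    · intro W hW
      rw [Finset.mem_powerset] at hW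
      show ((-1 : ℤ)) ^ (((S \ U) \ W).card) = (-1 : ℤ) ^ ((S \ (U ∪ W)).card)
      rw [sdiff_sdiff_left]
      rfl
  rw [hbij]
  have key : ∑ W ∈ (S \ U).powerset, (-1 : ℤ) ^ (((S \ U) \ W).card)
      = (-1 : ℤ) ^ ((S \ U).card) * ∑ W ∈ (S \ U).powerset, (-1 : ℤ) ^ (W.card) := by
    rw [Finset.mul_sum]
    apply Finset.sum_congr rfl
    intro W hW
    rw [Finset.mem_powerset] at hW
    rw [Finset.card_sdiff_of_subset hW]
    have hwd : W.card ≤ (S \ U).card := Finset.card_le_card hW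
    have h2 : (-1 : ℤ) ^ ((S \ U).card - W.card) * (-1) ^ W.card * (-1) ^ W.card
        = (-1) ^ (S \ U).card * (-1) ^ W.card := by
      rw [← pow_add, Nat.sub_add_cancel hwd]
    calc (-1 : ℤ) ^ ((S \ U).card - W.card)
        = (-1 : ℤ) ^ ((S \ U).card - W.card) * ((-1) ^ W.card * (-1) ^ W.card) := by
          rw [← pow_add, Even.neg_one_pow ⟨W.card, rfl⟩, mul_one]
      _ = (-1) ^ (S \ U).card * (-1) ^ W.card := by rw [← mul_assoc, h2]
  rw [key, Finset.sum_powerset_neg_one_pow_card]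
  by_cases h : U = S
  · subst h; simp
  · have hD : ¬ (S \ U = ∅) := by
      intro hc
      exact h (Finset.Subset.antisymm hU (Finset.sdiff_eq_empty_iff_subset.mp hc))
    rw [if_neg hD, if_neg h, mul_zero]

lemma beta_eq_alt (n : ℕ) (S : Finset ℕ) :
    (beta n S : ℤ) = ∑ T ∈ S.powerset, (-1 : ℤ) ^ ((S \ T).card) * (ASet n T : ℤ) := by
  classical
  have step1 : ∀ T, ((ASet n T : ℤ)) = ∑ U ∈ T.powerset, (beta n U : ℤ) := by
    intro T
    rw [ASet_eq_sum_beta]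
    push_cast
    rfl
  symm
  calc ∑ T ∈ S.powerset, (-1 : ℤ) ^ ((S \ T).card) * (ASet n T : ℤ)
      = ∑ T ∈ S.powerset, ∑ U ∈ T.powerset, (-1 : ℤ) ^ ((S \ T).card) * (beta n U : ℤ) := by
        apply Finset.sum_congr rfl
        intro T hT
        rw [step1, Finset.mul_sum]
    _ = ∑ U ∈ S.powerset, ∑ T ∈ S.powerset.filter (fun T => U ⊆ T),
          (-1 : ℤ) ^ ((S \ T).card) * (beta n U : ℤ) := by
        apply Finset.sum_comm'
        intro T U
        simp only [Finset.mem_powerset, Finset.mem_filter]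
        constructor
        · rintro ⟨h1, h2⟩
          exact ⟨⟨h1, h2⟩, h2.trans h1⟩
        · rintro ⟨⟨h1, h2⟩, h3⟩
          exact ⟨h1, h2⟩
    _ = ∑ U ∈ S.powerset, (if U = S then 1 else 0) * (beta n U : ℤ) := by
        apply Finset.sum_congr rfl
        intro U hU
        rw [← Finset.sum_mul, sum_interval_neg_one S U (Finset.mem_powerset.mp hU)]
    _ = (beta n S : ℤ) := by
        rw [Finset.sum_congr rfl (fun U _ => by rw [ite_mul, one_mul, zero_mul]),
          Finset.sum_ite_eq' S.powerset S (fun U => (beta n U : ℤ)),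
          if_pos (Finset.mem_powerset.mpr (le_refl S))]

end Mobius

section NumberTheory

variable {p r : ℕ}

lemma choose_pow_cast (hp : p.Prime) {k : ℕ} (h0 : k ≠ 0) (hk : k ≠ p ^ r) :
    ((p ^ r).choose k : ZMod p) = 0 := by
  rw [ZMod.natCast_eq_zero_iff]
  exact Nat.Prime.dvd_choose_pow hp h0 hk

lemma choose_two_pow_cast (hp : p.Prime) {k : ℕ} (h0 : k ≠ 0) (hk : k ≠ p ^ r)
    (hk2 : k ≠ 2 * p ^ r) : ((2 * p ^ r).choose k : ZMod p) = 0 := by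
  have h2q : 2 * p ^ r = p ^ r + p ^ r := by ring
  rw [h2q, Nat.add_choose_eq]
  push_cast
  apply Finset.sum_eq_zero
  rintro ⟨i, j⟩ hij
  rw [Finset.HasAntidiagonal.mem_antidiagonal] at hij
  by_cases hi0 : i = 0
  · subst hi0
    simp only [Nat.zero_add] at hij
    subst hij
    rw [choose_pow_cast hp h0 hk, mul_zero]
  · by_cases hiq : i = p ^ r
    · subst hiq
      have hj0 : j ≠ 0 := by omega
      have hjq : j ≠ p ^ r := by omega
      rw [choose_pow_cast hp hj0 hjq, mul_zero]
    · rw [choose_pow_cast hp hi0 hiq, zero_mul]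

lemma choose_two_pow_middle (hp : p.Prime) (hr : 1 ≤ r) :
    ((2 * p ^ r).choose (p ^ r) : ZMod p) = 2 := by
  have hq1 : 1 ≤ p ^ r := Nat.one_le_pow _ _ hp.pos
  have h2q : 2 * p ^ r = p ^ r + p ^ r := by ring
  rw [h2q, Nat.add_choose_eq]
  push_cast
  have hq0 : ((0 : ℕ), p ^ r) ≠ ((p ^ r : ℕ), 0) := by
    intro hc
    have := congrArg Prod.fst hc
    simp at this
    omega
  have hsub : ({((0 : ℕ), p ^ r), ((p ^ r : ℕ), 0)} : Finset (ℕ × ℕ))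
      ⊆ Finset.HasAntidiagonal.antidiagonal (p ^ r) := by
    intro x hx
    rw [Finset.mem_insert, Finset.mem_singleton] at hx
    rcases hx with rfl | rfl <;> simp [Finset.HasAntidiagonal.mem_antidiagonal]
  rw [← Finset.sum_subset hsub ?zero]
  case zero =>
    rintro ⟨i, j⟩ hij hnot
    rw [Finset.HasAntidiagonal.mem_antidiagonal] at hij
    rw [Finset.mem_insert, Finset.mem_singleton] at hnot
    have hi0 : i ≠ 0 := by
      intro hc; subst hc; exact hnot (Or.inl (by simp [Prod.ext_iff]; omega))
    have hiq : i ≠ p ^ r := by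
      intro hc; subst hc; exact hnot (Or.inr (by simp [Prod.ext_iff]; omega))
    rw [choose_pow_cast hp hi0 hiq, zero_mul]
  rw [Finset.sum_pair hq0]
  simp [Nat.choose_self, Nat.choose_zero_right]
  ring

end NumberTheory

lemma ASet_cast (hp : p.Prime) (hr : 1 ≤ r) (T : Finset ℕ)
    (hT : T ⊆ Finset.Ico 1 (2 * p ^ r)) :
    ((ASet (2 * p ^ r) T : ZMod p)) =
      if T = ∅ then 1 else if T = {p ^ r} then 2 else 0 := by
  have hq1 : 1 ≤ p ^ r := Nat.one_le_pow _ _ hp.pos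
  by_cases hTe : T = ∅
  · simp [hTe, ASet_empty]
  rw [if_neg hTe]
  have hne : T.Nonempty := Finset.nonempty_iff_ne_empty.mpr hTe
  have hsT : T.min' hne ∈ T := Finset.min'_mem _ _
  have hs_mem : 1 ≤ T.min' hne ∧ T.min' hne < 2 * p ^ r := by
    have := hT hsT
    rwa [Finset.mem_Ico] at this
  have hTrest : ∀ t ∈ T.erase (T.min' hne), T.min' hne < t ∧ t < 2 * p ^ r := by
    intro t ht
    rw [Finset.mem_erase] at ht
    have h1 := Finset.min'_le T t ht.2
    have h2 := hT ht.2
    rw [Finset.mem_Ico] at h2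
    exact ⟨lt_of_le_of_ne h1 (Ne.symm ht.1), h2.2⟩
  have hrec := ASet_rec (by omega) (by omega : T.min' hne < 2 * p ^ r)
    (T.erase (T.min' hne)) hTrest
  rw [Finset.insert_erase hsT] at hrec
  rw [hrec]
  push_cast
  by_cases hsq : T.min' hne = p ^ r
  · rw [hsq]
    by_cases hE : T.erase (p ^ r) = ∅
    · have hTq : T = {p ^ r} := by
        have := Finset.insert_erase (hsq ▸ hsT)
        rw [hE] at this
        exact this.symm
      rw [if_pos hTq]
      rw [hE, Finset.image_empty]
      have h2q : 2 * p ^ r - p ^ r = p ^ r := by omega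
      rw [h2q, ASet_empty, choose_two_pow_middle hp hr]
      push_cast
      ring
    · have hTq : T ≠ {p ^ r} := by
        intro hc
        rw [hc] at hE
        simp at hE
      rw [if_neg hTq]
      rw [hsq] at hTrest
      have h2q : 2 * p ^ r - p ^ r = p ^ r := by omega
      rw [h2q]
      -- second level
      have hE' : ((T.erase (p ^ r)).image (· - p ^ r)).Nonempty :=
        Finset.Nonempty.image (Finset.nonempty_iff_ne_empty.mpr hE) _
      set E' := (T.erase (p ^ r)).image (· - p ^ r) with hE'def
      have hE'mem : ∀ u ∈ E', 1 ≤ u ∧ u < p ^ r := by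
        intro u hu
        rw [hE'def, Finset.mem_image] at hu
        obtain ⟨t, ht, rfl⟩ := hu
        have := hTrest t ht
        omega
      have hs'T : E'.min' hE' ∈ E' := Finset.min'_mem _ _
      have hs'1 := hE'mem _ hs'T
      have hE'rest : ∀ u ∈ E'.erase (E'.min' hE'), E'.min' hE' < u ∧ u < p ^ r := by
        intro u hu
        rw [Finset.mem_erase] at hu
        have h1 := Finset.min'_le E' u hu.2
        exact ⟨lt_of_le_of_ne h1 (Ne.symm hu.1), (hE'mem u hu.2).2⟩
      have hrec2 := ASet_rec (by omega) (by omega : E'.min' hE' < p ^ r)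
        (E'.erase (E'.min' hE')) hE'rest
      rw [Finset.insert_erase hs'T] at hrec2
      rw [hrec2]
      push_cast
      rw [choose_pow_cast hp (by omega) (by omega)]
      ring
  · have hTq : T ≠ {p ^ r} := by
      intro hc
      subst hc
      exact hsq (Finset.min'_singleton _)
    rw [if_neg hTq]
    rw [choose_two_pow_cast hp (by omega) hsq (by omega)]
    ring

/-- For an odd prime power `q = p^r` and any `S ⊆ [2q - 1]`, the descent set
statistic satisfies `β_{2q}(S) ≡ (-1)^{|S ∖ {q}|} (mod p)`. -/
theorem beta_two_q_mod_p (p r : ℕ) (hp : p.Prime) (hpodd : Odd p) (hr : 1 ≤ r)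
    (S : Finset ℕ) (hS : S ⊆ Finset.Ico 1 (2 * p ^ r)) :
    (beta (2 * p ^ r) S : ℤ) ≡ (-1) ^ (S.erase (p ^ r)).card [ZMOD (p : ℤ)] := by
  classical
  rw [← ZMod.intCast_eq_intCast_iff]
  have hmain := congrArg (fun z : ℤ => (z : ZMod p)) (beta_eq_alt (2 * p ^ r) S)
  push_cast at hmain ⊢
  rw [hmain]
  have hAs : ∀ T ∈ S.powerset,
      ((-1 : ZMod p)) ^ ((S \ T).card) * (ASet (2 * p ^ r) T : ZMod p)
        = (-1 : ZMod p) ^ ((S \ T).card) *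
            (if T = ∅ then 1 else if T = {p ^ r} then 2 else 0) := by
    intro T hT
    rw [ASet_cast hp hr T ((Finset.mem_powerset.mp hT).trans hS)]
  rw [Finset.sum_congr rfl hAs]
  by_cases hqS : p ^ r ∈ S
  · have hne : (∅ : Finset ℕ) ≠ {p ^ r} := by
      intro hc
      exact absurd (hc ▸ Finset.mem_singleton_self (p ^ r)) (Finset.notMem_empty _)
    have hsub : ({∅, {p ^ r}} : Finset (Finset ℕ)) ⊆ S.powerset := by
      intro x hx
      rw [Finset.mem_insert, Finset.mem_singleton] at hx
      rcases hx with rfl | rfl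
      · exact Finset.mem_powerset.mpr (Finset.empty_subset S)
      · exact Finset.mem_powerset.mpr (Finset.singleton_subset_iff.mpr hqS)
    rw [← Finset.sum_subset hsub (by
      intro T hT hnot
      rw [Finset.mem_insert, Finset.mem_singleton] at hnot
      push_neg at hnot
      rw [if_neg hnot.1.ne_empty, if_neg hnot.2, mul_zero])]
    rw [Finset.sum_pair hne]
    rw [if_pos rfl, if_neg (Ne.symm hne), if_pos rfl]
    rw [Finset.sdiff_empty, ← Finset.erase_eq]
    have hcard : (S.erase (p ^ r)).card + 1 = S.card := Finset.card_erase_add_one hqS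
    rw [← hcard, pow_succ]
    ring
  · have hsub : ({∅} : Finset (Finset ℕ)) ⊆ S.powerset := by
      intro x hx
      rw [Finset.mem_singleton] at hx
      subst hx
      exact Finset.mem_powerset.mpr (Finset.empty_subset S)
    rw [← Finset.sum_subset hsub (by
      intro T hT hnot
      rw [Finset.mem_singleton] at hnot
      have hq : T ≠ {p ^ r} := by
        intro hc
        subst hc
        exact hqS (Finset.mem_powerset.mp hT (Finset.mem_singleton_self _))
      rw [if_neg hnot, if_neg hq, mul_zero])]
    rw [Finset.sum_singleton, if_pos rfl, Finset.sdiff_empty,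
      Finset.erase_eq_of_notMem hqS]
    ring
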